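/- arXiv:1609.06942 — 2 statements merged into one kernel-verified Lean document; each statement's English description precedes it below -/
import Mathlib

section
/- Let ω be a random vector in ℝ^d with distribution p and b uniformly distributed on [0, 2π] independent of ω. Then for all x, y ∈ ℝ^d, E[2·cos(⟨ω,x⟩+b)·cos(⟨ω,y⟩+b)] = E[cos(⟨ω, x−y⟩)], i.e. the random Fourier feature product is an unbiased estimator of the real part of the characteristic function of p evaluated at x−y. -/
open MeasureTheory ProbabilityTheory
open scoped RealInnerProductSpace

lemma rff_cos_identity (a c b : ℝ) : 2 * Real.cos (a + b) * Real.cos (c + b)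
    = Real.cos (a - c) + Real.cos (a + c + 2 * b) := by
  rw [Real.cos_add_cos]
  have h1 : ((a - c) + (a + c + 2 * b)) / 2 = a + b := by ring
  have h2 : ((a - c) - (a + c + 2 * b)) / 2 = -(c + b) := by ring
  rw [h1, h2, Real.cos_neg]

lemma rff_uniform_integral_zero (t : ℝ) :
    ∫ b, Real.cos (t + 2 * b)
      ∂((ENNReal.ofReal (2 * Real.pi))⁻¹ • volume.restrict (Set.Icc 0 (2 * Real.pi))) = 0 := by
  rw [integral_smul_measure]
  have : ∫ b in Set.Icc 0 (2 * Real.pi), Real.cos (t + 2 * b) = 0 := by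
    rw [MeasureTheory.integral_Icc_eq_integral_Ioc,
      ← intervalIntegral.integral_of_le (by positivity)]
    have h : ∀ b : ℝ, Real.cos (t + 2 * b) = Real.cos (2 * b + t) := fun b => by ring_nf
    simp_rw [h]
    have := intervalIntegral.integral_comp_mul_add (a := 0) (b := 2 * Real.pi)
      Real.cos two_ne_zero t
    simp only [integral_cos] at this
    rw [this]
    have h4 : 2 * (2 * Real.pi) + t = (t + 2 * Real.pi) + 2 * Real.pi := by ring
    rw [h4, Real.sin_add_two_pi, Real.sin_add_two_pi]
    simp
  rw [this, smul_zero]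

/-- If `ω ~ p` and `b ~ Uniform[0, 2π]` are independent, then for all `x, y`,
`E[2·cos(⟨ω,x⟩+b)·cos(⟨ω,y⟩+b)] = E[cos(⟨ω, x−y⟩)]`: the random Fourier feature product is
an unbiased estimator of the real part of the characteristic function of `p` at `x − y`. -/
theorem integral_two_cos_mul_cos_eq
    {d : ℕ} {Ω : Type*} [MeasurableSpace Ω] (μ : Measure Ω) [IsProbabilityMeasure μ]
    (p : Measure (EuclideanSpace ℝ (Fin d))) [IsProbabilityMeasure p]
    (W : Ω → EuclideanSpace ℝ (Fin d)) (B : Ω → ℝ)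
    (hW : Measurable W) (hB : Measurable B)
    (hWlaw : μ.map W = p)
    (hBlaw : μ.map B
      = (ENNReal.ofReal (2 * Real.pi))⁻¹ • volume.restrict (Set.Icc 0 (2 * Real.pi)))
    (hind : IndepFun W B μ)
    (x y : EuclideanSpace ℝ (Fin d)) :
    (∫ ω, 2 * Real.cos (⟪W ω, x⟫ + B ω) * Real.cos (⟪W ω, y⟫ + B ω) ∂μ)
      = ∫ ω, Real.cos ⟪W ω, x - y⟫ ∂μ := by
  have hWx : Measurable fun ω => ⟪W ω, x⟫ := hW.inner measurable_const
  have hWy : Measurable fun ω => ⟪W ω, y⟫ := hW.inner measurable_const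
  -- rewrite integrand
  have hrw : ∀ ω, 2 * Real.cos (⟪W ω, x⟫ + B ω) * Real.cos (⟪W ω, y⟫ + B ω)
      = Real.cos (⟪W ω, x⟫ - ⟪W ω, y⟫) + Real.cos (⟪W ω, x⟫ + ⟪W ω, y⟫ + 2 * B ω) :=
    fun ω => rff_cos_identity _ _ _
  simp_rw [hrw]
  have hint1 : Integrable (fun ω => Real.cos (⟪W ω, x⟫ - ⟪W ω, y⟫)) μ := by
    refine (integrable_const (1 : ℝ)).mono' ?_ ?_
    · exact ((hWx.sub hWy).cos).aestronglyMeasurable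
    · filter_upwards with ω using by simpa using Real.abs_cos_le_one _
  have hint2 : Integrable (fun ω => Real.cos (⟪W ω, x⟫ + ⟪W ω, y⟫ + 2 * B ω)) μ := by
    refine (integrable_const (1 : ℝ)).mono' ?_ ?_
    · exact (((hWx.add hWy).add (hB.const_mul 2)).cos).aestronglyMeasurable
    · filter_upwards with ω using by simpa using Real.abs_cos_le_one _
  rw [integral_add hint1 hint2]
  have h1 : (∫ ω, Real.cos (⟪W ω, x⟫ - ⟪W ω, y⟫) ∂μ) = ∫ ω, Real.cos ⟪W ω, x - y⟫ ∂μ := by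
    congr 1
    ext ω
    rw [inner_sub_right]
  -- the second integral vanishes
  have h2 : (∫ ω, Real.cos (⟪W ω, x⟫ + ⟪W ω, y⟫ + 2 * B ω) ∂μ) = 0 := by
    set η : Measure ℝ :=
      (ENNReal.ofReal (2 * Real.pi))⁻¹ • volume.restrict (Set.Icc 0 (2 * Real.pi)) with hη
    have hηprob : IsProbabilityMeasure η := by
      rw [← hBlaw]
      exact Measure.isProbabilityMeasure_map hB.aemeasurable
    have hg : Measurable fun q : (EuclideanSpace ℝ (Fin d)) × ℝ =>
        Real.cos (⟪q.1, x⟫ + ⟪q.1, y⟫ + 2 * q.2) := by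
      exact (((measurable_fst.inner measurable_const).add
        (measurable_fst.inner measurable_const)).add
        (measurable_snd.const_mul 2)).cos
    have hmap : μ.map (fun ω => (W ω, B ω)) = p.prod η := by
      rw [← hWlaw, ← hBlaw]
      exact (indepFun_iff_map_prod_eq_prod_map_map hW.aemeasurable hB.aemeasurable).mp hind
    calc (∫ ω, Real.cos (⟪W ω, x⟫ + ⟪W ω, y⟫ + 2 * B ω) ∂μ)
        = ∫ q : (EuclideanSpace ℝ (Fin d)) × ℝ,
            Real.cos (⟪q.1, x⟫ + ⟪q.1, y⟫ + 2 * q.2) ∂(μ.map (fun ω => (W ω, B ω))) := by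
          rw [integral_map (hW.prodMk hB).aemeasurable hg.aestronglyMeasurable]
      _ = ∫ w, ∫ b, Real.cos (⟪w, x⟫ + ⟪w, y⟫ + 2 * b) ∂η ∂p := by
          rw [hmap]
          refine integral_prod _ ?_
          refine (integrable_const (1 : ℝ)).mono' hg.aestronglyMeasurable ?_
          filter_upwards with q using by simpa using Real.abs_cos_le_one _
      _ = 0 := by
          have : ∀ w : EuclideanSpace ℝ (Fin d),
              (∫ b, Real.cos (⟪w, x⟫ + ⟪w, y⟫ + 2 * b) ∂η) = 0 := fun w =>
            rff_uniform_integral_zero (⟪w, x⟫ + ⟪w, y⟫)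
          simp_rw [this, integral_zero]
  rw [h1, h2, add_zero]
end

section
/- The Amari distance d(V, W) equals 0 if and only if VW^{-1} = DP for some invertible diagonal matrix D and permutation matrix P, i.e. each row and each column of A = VW^{-1} has exactly one nonzero entry. -/
open Matrix

/-- The Amari distance between invertible matrices `V` and `W`, computed from
`A = V·W⁻¹`. -/
noncomputable def amariDist {n : ℕ} (V W : Matrix (Fin n) (Fin n) ℝ) : ℝ :=
  let A := V * W⁻¹
  (1 / (2 * n)) * ∑ i, ((∑ j, |A i j|) / (⨆ j, |A i j|) - 1)
    + (1 / (2 * n)) * ∑ j, ((∑ i, |A i j|) / (⨆ i, |A i j|) - 1)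

lemma amari_perm_entry {n : ℕ} (σ : Equiv.Perm (Fin n)) (i j : Fin n) :
    (σ.permMatrix ℝ) i j = if σ i = j then 1 else 0 := by
  simp [Equiv.Perm.permMatrix, PEquiv.toMatrix_apply, Equiv.toPEquiv_apply]

lemma amari_key {n : ℕ} (hn : 0 < n) (f : Fin n → ℝ) (hf : ∀ j, 0 ≤ f j)
    (hne : ∃ j, f j ≠ 0) :
    (0 ≤ (∑ j, f j) / (⨆ j, f j) - 1) ∧
      ((∑ j, f j) / (⨆ j, f j) - 1 = 0 ↔ ∃! j, f j ≠ 0) := by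
  haveI : Nonempty (Fin n) := ⟨⟨0, hn⟩⟩
  obtain ⟨j0, hj0⟩ := Finite.exists_max f
  have hm : (⨆ j, f j) = f j0 :=
    le_antisymm (ciSup_le hj0) (le_ciSup (Finite.bddAbove_range f) j0)
  obtain ⟨j1, hj1⟩ := hne
  have hpos : 0 < f j0 := lt_of_lt_of_le ((hf j1).lt_of_ne (Ne.symm hj1)) (hj0 j1)
  have hsum : f j0 ≤ ∑ j, f j :=
    Finset.single_le_sum (fun j _ => hf j) (Finset.mem_univ j0)
  constructor
  · rw [hm, sub_nonneg, le_div_iff₀ hpos, one_mul]; exact hsum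
  · rw [hm, sub_eq_zero, div_eq_one_iff_eq hpos.ne']
    constructor
    · intro h
      have hrest : ∑ j ∈ Finset.univ.erase j0, f j = 0 := by
        have h2 : f j0 + ∑ j ∈ Finset.univ.erase j0, f j = ∑ j, f j :=
          Finset.add_sum_erase Finset.univ f (Finset.mem_univ j0)
        rw [h] at h2
        linarith
      have hz : ∀ j ∈ Finset.univ.erase j0, f j = 0 :=
        (Finset.sum_eq_zero_iff_of_nonneg (fun j _ => hf j)).mp hrest
      refine ⟨j0, hpos.ne', fun j hj => ?_⟩
      by_contra hjj
      exact hj (hz j (Finset.mem_erase.mpr ⟨hjj, Finset.mem_univ j⟩))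
    · rintro ⟨ju, hju, huniq⟩
      have hj0u : j0 = ju := huniq j0 hpos.ne'
      subst hj0u
      exact Finset.sum_eq_single j0 (fun j _ hj => by
        by_contra hjz
        exact hj (huniq j hjz)) (fun h => absurd (Finset.mem_univ j0) h)

/-- The Amari distance `d(V, W)` equals `0` if and only if `V·W⁻¹ = D·P` for some invertible
diagonal matrix `D` and permutation matrix `P` (equivalently, each row and column of
`A = V·W⁻¹` has exactly one nonzero entry). -/
theorem amariDist_eq_zero_iff {n : ℕ} (hn : 0 < n) (V W : Matrix (Fin n) (Fin n) ℝ)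
    (hV : IsUnit V.det) (hW : IsUnit W.det) :
    amariDist V W = 0 ↔
      ∃ (D : Matrix (Fin n) (Fin n) ℝ) (σ : Equiv.Perm (Fin n)),
        D.IsDiag ∧ IsUnit D.det ∧ V * W⁻¹ = D * σ.permMatrix ℝ := by
  haveI : Nonempty (Fin n) := ⟨⟨0, hn⟩⟩
  set A := V * W⁻¹ with hA
  have hAdet : IsUnit A.det := by
    rw [hA, det_mul, det_nonsing_inv]
    exact hV.mul (isUnit_ringInverse.mpr hW)
  have hrowne : ∀ i, ∃ j, A i j ≠ 0 := by
    intro i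
    by_contra h
    push_neg at h
    exact hAdet.ne_zero (det_eq_zero_of_row_eq_zero i h)
  have hcolne : ∀ j, ∃ i, A i j ≠ 0 := by
    intro j
    by_contra h
    push_neg at h
    exact hAdet.ne_zero (det_eq_zero_of_column_eq_zero j h)
  have hRkey := fun i => amari_key hn (fun j => |A i j|) (fun j => abs_nonneg _)
    ⟨(hrowne i).choose, by simpa [abs_ne_zero] using (hrowne i).choose_spec⟩
  have hCkey := fun j => amari_key hn (fun i => |A i j|) (fun i => abs_nonneg _)
    ⟨(hcolne j).choose, by simpa [abs_ne_zero] using (hcolne j).choose_spec⟩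
  have hAD : amariDist V W =
      (1 / (2 * n)) * ∑ i, ((∑ j, |A i j|) / (⨆ j, |A i j|) - 1)
        + (1 / (2 * n)) * ∑ j, ((∑ i, |A i j|) / (⨆ i, |A i j|) - 1) := rfl
  have hc : (0:ℝ) < 1 / (2 * n) := by positivity
  have hSR : 0 ≤ ∑ i, ((∑ j, |A i j|) / (⨆ j, |A i j|) - 1) :=
    Finset.sum_nonneg fun i _ => (hRkey i).1
  have hSC : 0 ≤ ∑ j, ((∑ i, |A i j|) / (⨆ i, |A i j|) - 1) :=
    Finset.sum_nonneg fun j _ => (hCkey j).1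
  have hchar : amariDist V W = 0 ↔
      (∀ i, ∃! j, A i j ≠ 0) ∧ (∀ j, ∃! i, A i j ≠ 0) := by
    rw [hAD]
    constructor
    · intro h
      have h1 : ∑ i, ((∑ j, |A i j|) / (⨆ j, |A i j|) - 1) = 0 := by nlinarith
      have h2 : ∑ j, ((∑ i, |A i j|) / (⨆ i, |A i j|) - 1) = 0 := by nlinarith
      have h1' := (Finset.sum_eq_zero_iff_of_nonneg (fun i _ => (hRkey i).1)).mp h1
      have h2' := (Finset.sum_eq_zero_iff_of_nonneg (fun j _ => (hCkey j).1)).mp h2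
      constructor
      · intro i
        obtain ⟨j, hj, hju⟩ := (hRkey i).2.mp (h1' i (Finset.mem_univ i))
        exact ⟨j, abs_ne_zero.mp hj, fun y hy => hju y (abs_ne_zero.mpr hy)⟩
      · intro j
        obtain ⟨i, hi, hiu⟩ := (hCkey j).2.mp (h2' j (Finset.mem_univ j))
        exact ⟨i, abs_ne_zero.mp hi, fun y hy => hiu y (abs_ne_zero.mpr hy)⟩
    · rintro ⟨hr, hcc⟩
      have h1 : ∑ i, ((∑ j, |A i j|) / (⨆ j, |A i j|) - 1) = 0 :=
        Finset.sum_eq_zero fun i _ => (hRkey i).2.mpr <| by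
          obtain ⟨j, hj, hju⟩ := hr i
          exact ⟨j, abs_ne_zero.mpr hj, fun y hy => hju y (abs_ne_zero.mp hy)⟩
      have h2 : ∑ j, ((∑ i, |A i j|) / (⨆ i, |A i j|) - 1) = 0 :=
        Finset.sum_eq_zero fun j _ => (hCkey j).2.mpr <| by
          obtain ⟨i, hi, hiu⟩ := hcc j
          exact ⟨i, abs_ne_zero.mpr hi, fun y hy => hiu y (abs_ne_zero.mp hy)⟩
      rw [h1, h2]; ring
  rw [hchar]
  constructor
  · rintro ⟨hr, hcc⟩
    choose g hg1 hg2 using hr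
    have hinj : Function.Injective g := by
      intro i1 i2 h
      have h2 : A i2 (g i1) ≠ 0 := by rw [h]; exact hg1 i2
      exact (hcc (g i1)).unique (hg1 i1) h2
    have hbij : Function.Bijective g := (Finite.injective_iff_bijective).mp hinj
    refine ⟨diagonal (fun i => A i (g i)), Equiv.ofBijective g hbij,
      isDiag_diagonal _, ?_, ?_⟩
    · rw [det_diagonal]
      exact isUnit_iff_ne_zero.mpr (Finset.prod_ne_zero_iff.mpr fun i _ => hg1 i)
    · ext i j
      rw [diagonal_mul, amari_perm_entry, Equiv.ofBijective_apply]
      by_cases h : g i = j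
      · subst h; simp
      · rw [if_neg h, mul_zero]
        by_contra hz
        exact h (hg2 i j hz).symm
  · rintro ⟨D, σ, hDiag, hDdet, hEq⟩
    have hDdiag : diagonal D.diag = D := hDiag.diagonal_diag
    have hDne : ∀ i, D i i ≠ 0 := by
      intro i
      have hd : D.det = ∏ i, D i i := by
        conv_lhs => rw [← hDdiag]
        rw [det_diagonal]
        rfl
      rw [hd] at hDdet
      exact Finset.prod_ne_zero_iff.mp hDdet.ne_zero i (Finset.mem_univ i)
    have hAij : ∀ i j, A i j = D i i * (if σ i = j then 1 else 0) := by
      intro i j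
      conv_lhs => rw [hEq, ← hDdiag]
      rw [diagonal_mul, amari_perm_entry]
      rfl
    constructor
    · intro i
      refine ⟨σ i, by simp [hAij, hDne i], fun j hj => ?_⟩
      have hj : A i j ≠ 0 := hj
      rw [hAij] at hj
      by_contra h
      simp [Ne.symm h] at hj
    · intro j
      refine ⟨σ.symm j, by simp [hAij, hDne], fun i hi => ?_⟩
      have hi : A i j ≠ 0 := hi
      rw [hAij] at hi
      by_contra h
      have : σ i ≠ j := fun hh => h (by simp [← hh])
      simp [this] at hi
end
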